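/- arXiv:2509.12695 — 2 statements merged into one kernel-verified Lean document; each statement's English description precedes it below -/
import Mathlib

section
/- Let P be a symmetric positive definite real n×n matrix, α > 0, and let M₁, …, M_N be real n×n matrices such that Mᵢᵀ P Mᵢ − P ≼ −α I for every i. Then for any nonnegative weights μ₁, …, μ_N summing to 1, the matrix M := Σᵢ μᵢ Mᵢ satisfies Mᵀ P M − P ≼ −α I. -/
open Matrix

lemma quad_convexOn {n : ℕ} {P : Matrix (Fin n) (Fin n) ℝ} (hP : P.PosSemidef) :
    ConvexOn ℝ Set.univ (fun v : Fin n → ℝ => v ⬝ᵥ P *ᵥ v) := by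
  refine ⟨convex_univ, fun x _ y _ a b ha hb hab => ?_⟩
  have hsymm : ∀ u v : Fin n → ℝ, u ⬝ᵥ P *ᵥ v = v ⬝ᵥ P *ᵥ u := by
    intro u v
    have hPt : Pᵀ = P := by
      have := hP.1
      exact (Matrix.isHermitian_iff_isSymm.mp this).eq
    rw [Matrix.dotProduct_mulVec, ← Matrix.mulVec_transpose, hPt,
      dotProduct_comm]
  have key : 2 * (x ⬝ᵥ P *ᵥ y) ≤ x ⬝ᵥ P *ᵥ x + y ⬝ᵥ P *ᵥ y := by
    have h0 := hP.dotProduct_mulVec_nonneg (x - y)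
    simp only [star_trivial] at h0
    rw [Matrix.mulVec_sub, sub_dotProduct, dotProduct_sub,
      dotProduct_sub] at h0
    rw [hsymm y x] at h0
    linarith
  have expand : (a • x + b • y) ⬝ᵥ P *ᵥ (a • x + b • y)
      = a * a * (x ⬝ᵥ P *ᵥ x) + 2 * a * b * (x ⬝ᵥ P *ᵥ y) + b * b * (y ⬝ᵥ P *ᵥ y) := by
    rw [Matrix.mulVec_add, Matrix.mulVec_smul, Matrix.mulVec_smul,
      add_dotProduct, smul_dotProduct, smul_dotProduct,
      dotProduct_add, dotProduct_add,
      dotProduct_smul, dotProduct_smul,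
      dotProduct_smul, dotProduct_smul, hsymm y x]
    simp only [smul_eq_mul]; ring
  simp only [smul_eq_mul]
  rw [expand]
  set px := x ⬝ᵥ P *ᵥ x with hpx
  set py := y ⬝ᵥ P *ᵥ y with hpy
  set pxy := x ⬝ᵥ P *ᵥ y with hpxy
  have hb' : b = 1 - a := by linarith
  subst hb'
  nlinarith [mul_nonneg (mul_nonneg ha hb) (show (0:ℝ) ≤ px + py - 2 * pxy by linarith)]

lemma quad_conj {n : ℕ} (P A : Matrix (Fin n) (Fin n) ℝ) (x : Fin n → ℝ) :
    x ⬝ᵥ (Aᵀ * P * A) *ᵥ x = (A *ᵥ x) ⬝ᵥ P *ᵥ (A *ᵥ x) := by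
  rw [Matrix.mul_assoc, ← Matrix.mulVec_mulVec, ← Matrix.mulVec_mulVec,
    Matrix.dotProduct_mulVec, Matrix.vecMul_transpose]


/-- Uniform-decay version of Lemma 1: if `Mᵢᵀ P Mᵢ - P ≼ -α I` for every vertex
matrix `Mᵢ` (with `P` symmetric positive definite and `α > 0`), then the same
inequality holds for every convex combination `M = Σᵢ μᵢ Mᵢ`. -/
theorem convex_combination_uniform_decay
    {n N : ℕ} (P : Matrix (Fin n) (Fin n) ℝ) (hP : P.PosDef)
    (α : ℝ) (hα : 0 < α)
    (M : Fin N → Matrix (Fin n) (Fin n) ℝ)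
    (hvert : ∀ i,
      Matrix.PosSemidef ((-α • (1 : Matrix (Fin n) (Fin n) ℝ)) -
        ((M i)ᵀ * P * M i - P)))
    (μ : Fin N → ℝ) (hμ : ∀ i, 0 ≤ μ i) (hsum : ∑ i, μ i = 1) :
    Matrix.PosSemidef ((-α • (1 : Matrix (Fin n) (Fin n) ℝ)) -
      ((∑ i, μ i • M i)ᵀ * P * (∑ i, μ i • M i) - P)) := by
  set Q := ∑ i, μ i • M i with hQ
  have hPt : Pᵀ = P := by
    have := hP.1
    exact (Matrix.isHermitian_iff_isSymm.mp this).eq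
  refine Matrix.PosSemidef.of_dotProduct_mulVec_nonneg ?_ ?_
  · -- Hermitian
    have h2 : (Qᵀ * P * Q).IsHermitian := by
      rw [← Matrix.conjTranspose_eq_transpose_of_trivial]
      exact Matrix.isHermitian_conjTranspose_mul_mul Q hP.1
    have h1 : ((-α • (1 : Matrix (Fin n) (Fin n) ℝ))).IsHermitian := by
      unfold Matrix.IsHermitian
      rw [Matrix.conjTranspose_smul, Matrix.conjTranspose_one, star_trivial]
    exact h1.sub (h2.sub hP.1)
  · intro x
    simp only [star_trivial]
    have hQx : Q *ᵥ x = ∑ i, μ i • (M i *ᵥ x) := by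
      ext j
      simp only [hQ, Matrix.mulVec, dotProduct, Finset.sum_apply, Matrix.sum_apply,
        Finset.sum_mul, Finset.mul_sum, Matrix.smul_apply, Pi.smul_apply, smul_eq_mul]
      rw [Finset.sum_comm]
      exact Finset.sum_congr rfl fun i _ => Finset.sum_congr rfl fun k _ => by ring
    -- vertex bounds on quadratic forms
    have hvb : ∀ i, (M i *ᵥ x) ⬝ᵥ P *ᵥ (M i *ᵥ x) ≤ x ⬝ᵥ P *ᵥ x - α * (x ⬝ᵥ x) := by
      intro i
      have h := (hvert i).dotProduct_mulVec_nonneg x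
      simp only [star_trivial] at h
      rw [Matrix.sub_mulVec, Matrix.sub_mulVec, dotProduct_sub,
        dotProduct_sub] at h
      rw [quad_conj P (M i) x] at h
      have h1 : x ⬝ᵥ (-α • (1 : Matrix (Fin n) (Fin n) ℝ)) *ᵥ x = -α * (x ⬝ᵥ x) := by
        rw [Matrix.smul_mulVec, Matrix.one_mulVec, dotProduct_smul]
        simp [smul_eq_mul]
      rw [h1] at h
      linarith
    -- Jensen
    have hje := (quad_convexOn hP.posSemidef).map_sum_le
      (t := Finset.univ) (w := μ) (p := fun i => M i *ᵥ x)
      (fun i _ => hμ i) (by simpa using hsum) (fun i _ => Set.mem_univ _)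
    simp only [smul_eq_mul] at hje
    have hbound : Q *ᵥ x ⬝ᵥ P *ᵥ (Q *ᵥ x) ≤ x ⬝ᵥ P *ᵥ x - α * (x ⬝ᵥ x) := by
      rw [hQx]
      refine le_trans hje ?_
      calc ∑ i, μ i * ((M i *ᵥ x) ⬝ᵥ P *ᵥ (M i *ᵥ x))
          ≤ ∑ i, μ i * (x ⬝ᵥ P *ᵥ x - α * (x ⬝ᵥ x)) :=
            Finset.sum_le_sum fun i _ => mul_le_mul_of_nonneg_left (hvb i) (hμ i)
        _ = x ⬝ᵥ P *ᵥ x - α * (x ⬝ᵥ x) := by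
            rw [← Finset.sum_mul, hsum, one_mul]
    rw [Matrix.sub_mulVec, Matrix.sub_mulVec, dotProduct_sub, dotProduct_sub,
      quad_conj P Q x]
    have h1 : x ⬝ᵥ (-α • (1 : Matrix (Fin n) (Fin n) ℝ)) *ᵥ x = -α * (x ⬝ᵥ x) := by
      rw [Matrix.smul_mulVec, Matrix.one_mulVec, dotProduct_smul]
      simp [smul_eq_mul]
    rw [h1]
    linarith
end

section
/- Let P be a symmetric positive definite real n×n matrix, α > 0, and let Φ_cl : ℝ^p → (real n×n matrices) be Lipschitz continuous with constant L > 0 with respect to the operator norm. Suppose (ρ_k) and (ρ̂_k) are sequences in ℝ^p such that Φ_cl(ρ_k)ᵀ P Φ_cl(ρ_k) − P ≼ −α I for every k. Then there exist constants ε* > 0, C > 0 and λ ∈ (0, 1), depending only on P, α and L, such that whenever ‖ρ̂_k − ρ_k‖ < ε* for all k, every trajectory of x_{k+1} = Φ_cl(ρ̂_k) x_k satisfies ‖x_k‖ ≤ C λᵏ ‖x₀‖ for all k; i.e., the origin is exponentially stable despite the scheduling mismatch. -/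
open Matrix
open scoped Matrix.Norms.L2Operator RealInnerProductSpace MatrixOrder

/-- The identity map `(Fin n → ℝ) → EuclideanSpace ℝ (Fin n)`. -/
noncomputable def eE {n : ℕ} (v : Fin n → ℝ) : EuclideanSpace ℝ (Fin n) :=
  (WithLp.equiv 2 _).symm v

lemma dot_eq_inner {n : ℕ} (u v : Fin n → ℝ) : u ⬝ᵥ v = ⟪eE u, eE v⟫ := by
  rw [eE, eE, WithLp.equiv_symm_apply, EuclideanSpace.inner_toLp_toLp]; simp; exact dotProduct_comm u v

lemma sqrt_dot {n : ℕ} (v : Fin n → ℝ) : Real.sqrt (v ⬝ᵥ v) = ‖eE v‖ := by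
  rw [dot_eq_inner, real_inner_self_eq_norm_sq, Real.sqrt_sq (norm_nonneg _)]

lemma dot_self_eq {n : ℕ} (v : Fin n → ℝ) : v ⬝ᵥ v = ‖eE v‖ ^ 2 := by
  rw [dot_eq_inner, real_inner_self_eq_norm_sq]

lemma dot_le {n : ℕ} (u v : Fin n → ℝ) : u ⬝ᵥ v ≤ ‖eE u‖ * ‖eE v‖ :=
  dot_eq_inner u v ▸ real_inner_le_norm (eE u) (eE v)

lemma mulVec_norm_le {n : ℕ} (A : Matrix (Fin n) (Fin n) ℝ) (v : Fin n → ℝ) :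
    ‖eE (A *ᵥ v)‖ ≤ ‖A‖ * ‖eE v‖ := A.l2_opNorm_mulVec (eE v)

lemma mulVec_dot {n : ℕ} (A : Matrix (Fin n) (Fin n) ℝ) (u v : Fin n → ℝ) :
    (A *ᵥ u) ⬝ᵥ v = u ⬝ᵥ (Aᵀ *ᵥ v) := by
  rw [Matrix.dotProduct_mulVec, Matrix.vecMul_transpose, dotProduct_comm]

lemma symm_dot {n : ℕ} {P : Matrix (Fin n) (Fin n) ℝ} (hP : P.IsHermitian)
    (u v : Fin n → ℝ) : u ⬝ᵥ (P *ᵥ v) = v ⬝ᵥ (P *ᵥ u) := by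
  have hPt : Pᵀ = P := by
    have := hP.eq
    rwa [Matrix.conjTranspose_eq_transpose_of_trivial] at this
  rw [← hPt, ← mulVec_dot, dotProduct_comm, hPt]

lemma quad_form {n : ℕ} (A P : Matrix (Fin n) (Fin n) ℝ) (v : Fin n → ℝ) :
    (A *ᵥ v) ⬝ᵥ (P *ᵥ (A *ᵥ v)) = v ⬝ᵥ ((Aᵀ * P * A) *ᵥ v) := by
  rw [mulVec_dot, Matrix.mulVec_mulVec, Matrix.mulVec_mulVec, Matrix.mul_assoc]

lemma lyap_scalar {n : ℕ} {α : ℝ} {P A : Matrix (Fin n) (Fin n) ℝ}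
    (h : Matrix.PosSemidef ((-α • (1 : Matrix (Fin n) (Fin n) ℝ)) - (Aᵀ * P * A - P)))
    (v : Fin n → ℝ) :
    v ⬝ᵥ ((Aᵀ * P * A) *ᵥ v) ≤ v ⬝ᵥ (P *ᵥ v) - α * (v ⬝ᵥ v) := by
  have h2 := h.dotProduct_mulVec_nonneg v
  simp only [star_trivial] at h2
  rw [Matrix.sub_mulVec, Matrix.sub_mulVec, Matrix.smul_mulVec, Matrix.one_mulVec,
    dotProduct_sub, dotProduct_sub, dotProduct_smul] at h2
  simp only [smul_eq_mul, neg_mul] at h2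
  linarith

set_option maxHeartbeats 1000000 in
/-- Theorem 2 (Exponential Stability of MAPS-Gain LPV Control under Parameter
Estimation Error): if the closed-loop map `Φ_cl` is `L`-Lipschitz in the
scheduling parameter (operator norm) and the true closed-loop matrices satisfy
a common discrete Lyapunov inequality `Φ_cl(ρ_k)ᵀ P Φ_cl(ρ_k) - P ≼ -α I`,
then there are constants `ε* > 0`, `C > 0`, `λ ∈ (0,1)` depending only on
`P`, `α`, `L` such that whenever `‖ρ̂_k - ρ_k‖ < ε*` for all `k`, every
trajectory of `x_{k+1} = Φ_cl(ρ̂_k) x_k` satisfies `‖x_k‖ ≤ C λᵏ ‖x₀‖`. -/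
theorem maps_exponential_stability_under_mismatch
    {n p : ℕ} (P : Matrix (Fin n) (Fin n) ℝ) (hP : P.PosDef)
    (α : ℝ) (hα : 0 < α)
    (Φcl : EuclideanSpace ℝ (Fin p) → Matrix (Fin n) (Fin n) ℝ)
    (L : ℝ) (hL : 0 < L)
    (hLip : ∀ ρ₁ ρ₂, ‖Φcl ρ₁ - Φcl ρ₂‖ ≤ L * ‖ρ₁ - ρ₂‖) :
    ∃ εstar C lam : ℝ, 0 < εstar ∧ 0 < C ∧ 0 < lam ∧ lam < 1 ∧
      ∀ (ρ ρhat : ℕ → EuclideanSpace ℝ (Fin p)),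
        (∀ k, Matrix.PosSemidef ((-α • (1 : Matrix (Fin n) (Fin n) ℝ)) -
          ((Φcl (ρ k))ᵀ * P * Φcl (ρ k) - P))) →
        (∀ k, ‖ρhat k - ρ k‖ < εstar) →
        ∀ x : ℕ → Fin n → ℝ,
          (∀ k, x (k + 1) = Φcl (ρhat k) *ᵥ x k) →
          ∀ k, Real.sqrt (x k ⬝ᵥ x k) ≤
            C * lam ^ k * Real.sqrt (x 0 ⬝ᵥ x 0) := by
  classical
  set S := CFC.sqrt P with hSdef
  have hSS : S * S = P := CFC.sqrt_mul_sqrt_self P hP.posSemidef.nonneg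
  have hdet : IsUnit S.det := by
    have h2 : S.det * S.det = P.det := by rw [← Matrix.det_mul, hSS]
    have hp : 0 < P.det := hP.det_pos
    refine isUnit_iff_ne_zero.mpr fun h => ?_
    rw [h, mul_zero] at h2
    rw [← h2] at hp; exact lt_irrefl _ hp
  have hinv : S⁻¹ * S = 1 := Matrix.nonsing_inv_mul S hdet
  have hSt : Sᵀ = S := by
    have := (CFC.sqrt_nonneg P).posSemidef.isHermitian.eq
    rwa [Matrix.conjTranspose_eq_transpose_of_trivial] at this
  clear hSdef
  clear_value S
  -- lower bound through S
  have hlow : ∀ v : Fin n → ℝ, ‖eE v‖ ≤ ‖S⁻¹‖ * ‖eE (S *ᵥ v)‖ := by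
    intro v
    have hv : v = S⁻¹ *ᵥ (S *ᵥ v) := by
      rw [Matrix.mulVec_mulVec, hinv, Matrix.one_mulVec]
    calc ‖eE v‖ = ‖eE (S⁻¹ *ᵥ (S *ᵥ v))‖ := by rw [← hv]
      _ ≤ ‖S⁻¹‖ * ‖eE (S *ᵥ v)‖ := mulVec_norm_le _ _
  -- quadratic form identity
  have hquadP : ∀ v : Fin n → ℝ, v ⬝ᵥ (P *ᵥ v) = ‖eE (S *ᵥ v)‖ ^ 2 := by
    intro v
    calc v ⬝ᵥ (P *ᵥ v) = v ⬝ᵥ (Sᵀᵀ *ᵥ (S *ᵥ v)) := by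
          rw [Matrix.transpose_transpose, Matrix.mulVec_mulVec, hSS]
      _ = (Sᵀ *ᵥ v) ⬝ᵥ (S *ᵥ v) := (mulVec_dot Sᵀ v _).symm
      _ = (S *ᵥ v) ⬝ᵥ (S *ᵥ v) := by rw [hSt]
      _ = ‖eE (S *ᵥ v)‖ ^ 2 := dot_self_eq _
  -- constants
  set M : ℝ := ‖S‖ * ‖S⁻¹‖ with hMdef
  have hM0 : 0 ≤ M := mul_nonneg (norm_nonneg _) (norm_nonneg _)
  set D : ℝ := ‖P‖ * (2 * M + 1) + 1 with hDdef
  have hD : 0 < D := by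
    have : (0:ℝ) ≤ ‖P‖ * (2 * M + 1) :=
      mul_nonneg (norm_nonneg _) (by linarith)
    rw [hDdef]; linarith
  have hP1 : (0:ℝ) < ‖P‖ + 1 := by positivity
  clear_value M D
  refine ⟨min (1 / L) (α / (2 * L * D)), M + 1,
    Real.sqrt (max (1 - α / (2 * (‖P‖ + 1))) (1 / 2)),
    lt_min (by positivity) (by positivity), by linarith, ?_, ?_, ?_⟩
  · exact Real.sqrt_pos.mpr (lt_of_lt_of_le one_half_pos (le_max_right _ _))
  · have hmax : max (1 - α / (2 * (‖P‖ + 1))) (1 / 2) < 1 := by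
      apply max_lt
      · have : 0 < α / (2 * (‖P‖ + 1)) := by positivity
        linarith
      · norm_num
    have := Real.sqrt_lt_sqrt (le_max_of_le_right (by norm_num)) hmax
    simpa [Real.sqrt_one] using this
  · intro ρ ρhat hLy hEps x hx
    set lam : ℝ := Real.sqrt (max (1 - α / (2 * (‖P‖ + 1))) (1 / 2)) with hlamdef
    have hmaxnn : (0:ℝ) ≤ max (1 - α / (2 * (‖P‖ + 1))) (1 / 2) :=
      le_max_of_le_right (by norm_num)
    have hlamsq : lam ^ 2 = max (1 - α / (2 * (‖P‖ + 1))) (1 / 2) :=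
      Real.sq_sqrt hmaxnn
    have hlamnn : 0 ≤ lam := Real.sqrt_nonneg _
    clear hlamdef
    clear_value lam
    have hWnn : ∀ k, 0 ≤ x k ⬝ᵥ (P *ᵥ x k) := by
      intro k; rw [hquadP (x k)]; positivity
    -- one-step estimate
    have hstep : ∀ k, x (k + 1) ⬝ᵥ (P *ᵥ x (k + 1)) ≤
        lam ^ 2 * (x k ⬝ᵥ (P *ᵥ x k)) := by
      intro k
      set Φ := Φcl (ρ k) with hΦdef
      set Δ := Φcl (ρhat k) - Φ with hΔdef
      set v := x k with hvdef
      set u := Φ *ᵥ v with hudef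
      set w := Δ *ᵥ v with hwdef
      have hΔn : ‖Δ‖ ≤ L * ‖ρhat k - ρ k‖ := hLip _ _
      have hΔnn : 0 ≤ ‖Δ‖ := norm_nonneg _
      have hΔ1 : ‖Δ‖ ≤ 1 := by
        have h1 := (hEps k).le.trans (min_le_left _ _)
        calc ‖Δ‖ ≤ L * ‖ρhat k - ρ k‖ := hΔn
          _ ≤ L * (1 / L) := mul_le_mul_of_nonneg_left h1 hL.le
          _ = 1 := by field_simp
      have hΔ2 : ‖Δ‖ ≤ α / (2 * D) := by
        have h1 := (hEps k).le.trans (min_le_right _ _)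
        calc ‖Δ‖ ≤ L * ‖ρhat k - ρ k‖ := hΔn
          _ ≤ L * (α / (2 * L * D)) := mul_le_mul_of_nonneg_left h1 hL.le
          _ = α / (2 * D) := by field_simp
      have hxk1 : x (k + 1) = u + w := by
        have hΦΔ : Φ + Δ = Φcl (ρhat k) := by rw [hΔdef]; abel
        rw [hx k, ← hΦΔ, Matrix.add_mulVec]
      have hexp : x (k + 1) ⬝ᵥ (P *ᵥ x (k + 1)) =
          u ⬝ᵥ (P *ᵥ u) + 2 * (w ⬝ᵥ (P *ᵥ u)) + w ⬝ᵥ (P *ᵥ w) := by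
        rw [hxk1, Matrix.mulVec_add, add_dotProduct, dotProduct_add,
          dotProduct_add, symm_dot hP.isHermitian u w]
        ring
      -- Lyapunov bound on u⬝Pu
      have hvv : v ⬝ᵥ v = ‖eE v‖ ^ 2 := dot_self_eq v
      have hu : u ⬝ᵥ (P *ᵥ u) ≤ v ⬝ᵥ (P *ᵥ v) - α * ‖eE v‖ ^ 2 := by
        have := lyap_scalar (hLy k) v
        rw [hvv] at this
        rw [hudef, quad_form]
        exact this
      -- bound on ‖u‖
      have hNu : ‖eE u‖ ≤ M * ‖eE v‖ := by
        have h3 : ‖eE (S *ᵥ v)‖ ≤ ‖S‖ * ‖eE v‖ := mulVec_norm_le _ _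
        have h3sq : ‖eE (S *ᵥ v)‖ ^ 2 ≤ (‖S‖ * ‖eE v‖) ^ 2 :=
          pow_le_pow_left₀ (norm_nonneg _) h3 2
        have hαvv : 0 ≤ α * ‖eE v‖ ^ 2 := by positivity
        have h1 : ‖eE (S *ᵥ u)‖ ^ 2 ≤ (‖S‖ * ‖eE v‖) ^ 2 := by
          rw [← hquadP u]
          have h2 : v ⬝ᵥ (P *ᵥ v) = ‖eE (S *ᵥ v)‖ ^ 2 := hquadP v
          linarith [hu, h2 ▸ h3sq]
        have h4 : ‖eE (S *ᵥ u)‖ ≤ ‖S‖ * ‖eE v‖ := by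
          have := Real.sqrt_le_sqrt h1
          rwa [Real.sqrt_sq (norm_nonneg _), Real.sqrt_sq (by positivity)] at this
        calc ‖eE u‖ ≤ ‖S⁻¹‖ * ‖eE (S *ᵥ u)‖ := hlow u
          _ ≤ ‖S⁻¹‖ * (‖S‖ * ‖eE v‖) := mul_le_mul_of_nonneg_left h4 (norm_nonneg _)
          _ = M * ‖eE v‖ := by rw [hMdef]; ring
      have hNw : ‖eE w‖ ≤ ‖Δ‖ * ‖eE v‖ := mulVec_norm_le _ _
      have hWv : 0 ≤ v ⬝ᵥ (P *ᵥ v) := hWnn k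
      clear hΦdef hΔdef hvdef hudef hwdef
      clear_value Φ Δ v u w
      -- cross term
      have h9 : ‖eE w‖ * ‖eE u‖ ≤ (‖Δ‖ * ‖eE v‖) * (M * ‖eE v‖) :=
        mul_le_mul hNw hNu (norm_nonneg _) (mul_nonneg hΔnn (norm_nonneg _))
      have hcross : w ⬝ᵥ (P *ᵥ u) ≤ ‖Δ‖ * (‖P‖ * (M * ‖eE v‖ ^ 2)) := by
        calc w ⬝ᵥ (P *ᵥ u) ≤ ‖eE w‖ * ‖eE (P *ᵥ u)‖ := dot_le _ _
          _ ≤ ‖eE w‖ * (‖P‖ * ‖eE u‖) :=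
            mul_le_mul_of_nonneg_left (mulVec_norm_le _ _) (norm_nonneg _)
          _ = ‖P‖ * (‖eE w‖ * ‖eE u‖) := by ring
          _ ≤ ‖P‖ * ((‖Δ‖ * ‖eE v‖) * (M * ‖eE v‖)) :=
            mul_le_mul_of_nonneg_left h9 (norm_nonneg _)
          _ = ‖Δ‖ * (‖P‖ * (M * ‖eE v‖ ^ 2)) := by ring
      -- quadratic term
      have h9w : ‖eE w‖ * ‖eE w‖ ≤ (‖Δ‖ * ‖eE v‖) * (‖Δ‖ * ‖eE v‖) :=
        mul_le_mul hNw hNw (norm_nonneg _) (mul_nonneg hΔnn (norm_nonneg _))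
      have h10 : ‖Δ‖ * ‖Δ‖ ≤ ‖Δ‖ := by nlinarith
      have hquadw : w ⬝ᵥ (P *ᵥ w) ≤ ‖Δ‖ * (‖P‖ * ‖eE v‖ ^ 2) := by
        calc w ⬝ᵥ (P *ᵥ w) ≤ ‖eE w‖ * ‖eE (P *ᵥ w)‖ := dot_le _ _
          _ ≤ ‖eE w‖ * (‖P‖ * ‖eE w‖) :=
            mul_le_mul_of_nonneg_left (mulVec_norm_le _ _) (norm_nonneg _)
          _ = ‖P‖ * (‖eE w‖ * ‖eE w‖) := by ring
          _ ≤ ‖P‖ * ((‖Δ‖ * ‖eE v‖) * (‖Δ‖ * ‖eE v‖)) :=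
            mul_le_mul_of_nonneg_left h9w (norm_nonneg _)
          _ = (‖Δ‖ * ‖Δ‖) * (‖P‖ * ‖eE v‖ ^ 2) := by ring
          _ ≤ ‖Δ‖ * (‖P‖ * ‖eE v‖ ^ 2) := by
            apply mul_le_mul_of_nonneg_right h10 (by positivity)
      -- combine
      have hDg : 2 * (‖P‖ * M) + ‖P‖ ≤ D := by
        rw [hDdef]; nlinarith [norm_nonneg P, hM0]
      have hDg0 : (0:ℝ) ≤ 2 * (‖P‖ * M) + ‖P‖ := by
        nlinarith [norm_nonneg P, hM0]
      have hΔD : ‖Δ‖ * (2 * (‖P‖ * M) + ‖P‖) ≤ α / 2 := by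
        have h6 : ‖Δ‖ * (2 * (‖P‖ * M) + ‖P‖) ≤ (α / (2 * D)) * D :=
          mul_le_mul hΔ2 hDg hDg0 (by positivity)
        have h7 : (α / (2 * D)) * D = α / 2 := by field_simp
        linarith
      have h8 : ‖Δ‖ * (2 * (‖P‖ * M) + ‖P‖) * ‖eE v‖ ^ 2 ≤ α / 2 * ‖eE v‖ ^ 2 :=
        mul_le_mul_of_nonneg_right hΔD (sq_nonneg _)
      have h11 : u ⬝ᵥ (P *ᵥ u) + 2 * (w ⬝ᵥ (P *ᵥ u)) + w ⬝ᵥ (P *ᵥ w) ≤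
          v ⬝ᵥ (P *ᵥ v) - α / 2 * ‖eE v‖ ^ 2 := by
        nlinarith [hu, hcross, hquadw, h8, hα, sq_nonneg (‖eE v‖)]
      have hPN : v ⬝ᵥ (P *ᵥ v) ≤ (‖P‖ + 1) * ‖eE v‖ ^ 2 := by
        calc v ⬝ᵥ (P *ᵥ v) ≤ ‖eE v‖ * ‖eE (P *ᵥ v)‖ := dot_le _ _
          _ ≤ ‖eE v‖ * (‖P‖ * ‖eE v‖) :=
            mul_le_mul_of_nonneg_left (mulVec_norm_le _ _) (norm_nonneg _)
          _ ≤ (‖P‖ + 1) * ‖eE v‖ ^ 2 := by nlinarith [norm_nonneg (eE v), norm_nonneg P]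
      have h13 : α / (2 * (‖P‖ + 1)) * ((‖P‖ + 1) * ‖eE v‖ ^ 2) = α / 2 * ‖eE v‖ ^ 2 := by
        field_simp
      have h14 : α / (2 * (‖P‖ + 1)) * (v ⬝ᵥ (P *ᵥ v)) ≤ α / 2 * ‖eE v‖ ^ 2 := by
        rw [← h13]
        exact mul_le_mul_of_nonneg_left hPN (by positivity)
      have h15 : (1 - α / (2 * (‖P‖ + 1))) * (v ⬝ᵥ (P *ᵥ v)) ≤
          lam ^ 2 * (v ⬝ᵥ (P *ᵥ v)) := by
        apply mul_le_mul_of_nonneg_right _ hWv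
        rw [hlamsq]; exact le_max_left _ _
      rw [hexp]
      nlinarith [h11, h14, h15, hWv]
    -- iterate
    have hiter : ∀ k, x k ⬝ᵥ (P *ᵥ x k) ≤ (lam ^ 2) ^ k * (x 0 ⬝ᵥ (P *ᵥ x 0)) := by
      intro k
      induction k with
      | zero => simp
      | succ k ih =>
        calc x (k + 1) ⬝ᵥ (P *ᵥ x (k + 1)) ≤ lam ^ 2 * (x k ⬝ᵥ (P *ᵥ x k)) := hstep k
          _ ≤ lam ^ 2 * ((lam ^ 2) ^ k * (x 0 ⬝ᵥ (P *ᵥ x 0))) :=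
            mul_le_mul_of_nonneg_left ih (sq_nonneg _)
          _ = (lam ^ 2) ^ (k + 1) * (x 0 ⬝ᵥ (P *ᵥ x 0)) := by ring
    intro k
    have hW0 : Real.sqrt (x 0 ⬝ᵥ (P *ᵥ x 0)) ≤ ‖S‖ * ‖eE (x 0)‖ := by
      rw [hquadP (x 0), Real.sqrt_sq (norm_nonneg _)]
      exact mulVec_norm_le _ _
    have hWk : Real.sqrt (x k ⬝ᵥ (P *ᵥ x k)) = ‖eE (S *ᵥ x k)‖ := by
      rw [hquadP (x k), Real.sqrt_sq (norm_nonneg _)]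
    have hsqrtiter : Real.sqrt (x k ⬝ᵥ (P *ᵥ x k)) ≤
        lam ^ k * Real.sqrt (x 0 ⬝ᵥ (P *ᵥ x 0)) := by
      calc Real.sqrt (x k ⬝ᵥ (P *ᵥ x k))
          ≤ Real.sqrt ((lam ^ 2) ^ k * (x 0 ⬝ᵥ (P *ᵥ x 0))) :=
          Real.sqrt_le_sqrt (hiter k)
        _ = lam ^ k * Real.sqrt (x 0 ⬝ᵥ (P *ᵥ x 0)) := by
          rw [Real.sqrt_mul (by positivity), ← pow_mul, mul_comm 2 k, pow_mul,
            Real.sqrt_sq (by positivity)]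
    calc Real.sqrt (x k ⬝ᵥ x k) = ‖eE (x k)‖ := sqrt_dot _
      _ ≤ ‖S⁻¹‖ * ‖eE (S *ᵥ x k)‖ := hlow _
      _ = ‖S⁻¹‖ * Real.sqrt (x k ⬝ᵥ (P *ᵥ x k)) := by rw [hWk]
      _ ≤ ‖S⁻¹‖ * (lam ^ k * Real.sqrt (x 0 ⬝ᵥ (P *ᵥ x 0))) :=
        mul_le_mul_of_nonneg_left hsqrtiter (norm_nonneg _)
      _ ≤ ‖S⁻¹‖ * (lam ^ k * (‖S‖ * ‖eE (x 0)‖)) := by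
        apply mul_le_mul_of_nonneg_left _ (norm_nonneg _)
        exact mul_le_mul_of_nonneg_left hW0 (by positivity)
      _ ≤ (M + 1) * lam ^ k * ‖eE (x 0)‖ := by
        rw [hMdef]
        nlinarith [norm_nonneg (eE (x 0)), norm_nonneg S, norm_nonneg S⁻¹,
          pow_nonneg hlamnn k, mul_nonneg (norm_nonneg S) (norm_nonneg S⁻¹)]
      _ = (M + 1) * lam ^ k * Real.sqrt (x 0 ⬝ᵥ x 0) := by rw [sqrt_dot]
end
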